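/- With R = K⟦f₁,…,f_s⟧ as in the context, R possesses exactly one minimal reduced basis: there exists a minimal reduced basis of R, and any two minimal reduced bases of R are equal as sets. -/

import Mathlib

set_option synthInstance.maxHeartbeats 1000000
set_option maxHeartbeats 1000000

open PowerSeries

/-- The order of a formal power series: the least `i` such that the coefficient of `x^i`
is nonzero (junk value `0` for the zero series). -/
noncomputable def ord (K : Type*) [Field K] (f : PowerSeries K) : ℕ :=
  sInf {i | coeff i f ≠ 0}

/-- The set of orders of nonzero elements of a subalgebra `R ⊆ K⟦x⟧`. -/
def oSet (K : Type*) [Field K] (R : Subalgebra K (PowerSeries K)) : Set ℕ :=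
  {n | ∃ f ∈ R, f ≠ 0 ∧ ord K f = n}

/-- The quotient `K⟦x⟧/R` has finite length as an `R`-module. -/
def FiniteLengthQuot (K : Type*) [Field K] (R : Subalgebra K (PowerSeries K)) : Prop :=
  IsFiniteLength R (PowerSeries K ⧸ LinearMap.range (Algebra.linearMap R (PowerSeries K)))

/-- The closure of a subalgebra of `K⟦x⟧` in the `x`-adic topology:
`f` belongs to the closure of `S` iff for every `n` there is an element of `S`
agreeing with `f` on all coefficients up to `n`. -/
def adicClosure {K : Type*} [Field K] (S : Subalgebra K (PowerSeries K)) :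
    Subalgebra K (PowerSeries K) where
  carrier := {f | ∀ n : ℕ, ∃ p ∈ S, ∀ i ≤ n, coeff i f = coeff i p}
  add_mem' := by
    intro f g hf hg n
    obtain ⟨p, hpS, hp⟩ := hf n
    obtain ⟨q, hqS, hq⟩ := hg n
    exact ⟨p + q, S.add_mem hpS hqS, fun i hi => by
      simp [map_add, hp i hi, hq i hi]⟩
  mul_mem' := by
    intro f g hf hg n
    obtain ⟨p, hpS, hp⟩ := hf n
    obtain ⟨q, hqS, hq⟩ := hg n
    refine ⟨p * q, S.mul_mem hpS hqS, fun i hi => ?_⟩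
    rw [coeff_mul, coeff_mul]
    refine Finset.sum_congr rfl fun ab hab => ?_
    have h := Finset.HasAntidiagonal.mem_antidiagonal.mp hab
    rw [hp ab.1 (by omega), hq ab.2 (by omega)]
  algebraMap_mem' := fun r => fun n => ⟨algebraMap K _ r, S.algebraMap_mem r, fun i _ => rfl⟩

/-- `K⟦f₁,…,f_s⟧`, the subalgebra of `K⟦x⟧` consisting of all power series of the form
`P(f₁,…,f_s)` with `P ∈ K⟦X₁,…,X_s⟧` (for `fᵢ` of positive order), realized as the
`x`-adic closure of the subalgebra generated by `f₁, …, f_s`; this closure coincides with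
the image of the substitution homomorphism `K⟦X₁,…,X_s⟧ → K⟦x⟧`, `Xᵢ ↦ fᵢ`. -/
noncomputable def seriesAlgebra {K : Type*} [Field K] {s : ℕ} (f : Fin s → PowerSeries K) :
    Subalgebra K (PowerSeries K) :=
  adicClosure (Algebra.adjoin K (Set.range f))

/-- The minimal generating set of the numerical semigroup `o(R)`: the minimal elements of
`o(R) ∖ {0}` with respect to the partial order `b ≤_S a ↔ a − b ∈ o(R)`. -/
def minGens (K : Type*) [Field K] (R : Subalgebra K (PowerSeries K)) : Set ℕ :=
  {a | a ∈ oSet K R ∧ a ≠ 0 ∧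
    ∀ b ∈ oSet K R, b ≠ 0 → (∃ u ∈ oSet K R, a = b + u) → b = a}

/-- `B` is a minimal reduced basis of `R`: a finite set of monic elements of `R` whose
orders form the minimal generating set of the numerical semigroup `o(R)` (in particular
they generate `o(R)`), and such that for each `g ∈ B` the support of `g − x^{o(g)}` is
contained in `ℕ ∖ o(R)`. -/
def IsMinimalReducedBasis (K : Type*) [Field K] (R : Subalgebra K (PowerSeries K))
    (B : Finset (PowerSeries K)) : Prop :=
  (↑B ⊆ (R : Set (PowerSeries K))) ∧
  (∀ g ∈ B, coeff (ord K g) g = 1) ∧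
  (oSet K R = ↑(AddSubmonoid.closure (ord K '' ↑B))) ∧
  (ord K '' ↑B = minGens K R) ∧
  (∀ g ∈ B, ∀ i : ℕ, coeff i (g - (X : PowerSeries K) ^ ord K g) ≠ 0 → i ∉ oSet K R)


namespace Aux
variable {K : Type*} [Field K]

lemma supp_nonempty {f : PowerSeries K} (hf : f ≠ 0) : {i | coeff i f ≠ 0}.Nonempty := by
  by_contra h
  apply hf
  ext n
  by_contra hn
  exact h ⟨n, hn⟩

lemma ord_coeff_ne {f : PowerSeries K} (hf : f ≠ 0) : coeff (ord K f) f ≠ 0 :=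
  Nat.sInf_mem (supp_nonempty hf)

lemma ord_le {f : PowerSeries K} {i : ℕ} (h : coeff i f ≠ 0) : ord K f ≤ i :=
  Nat.sInf_le (show i ∈ {i | coeff i f ≠ 0} from h)

lemma coeff_eq_zero_of_lt_ord {f : PowerSeries K} {i : ℕ} (hi : i < ord K f) :
    coeff i f = 0 := by
  by_contra h
  exact absurd (ord_le h) (by omega)

lemma ord_eq {f : PowerSeries K} {n : ℕ} (h1 : coeff n f ≠ 0)
    (h2 : ∀ i < n, coeff i f = 0) : ord K f = n := by
  have h3 := ord_le h1
  rcases lt_or_eq_of_le h3 with h | h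
  · exact absurd (h2 _ h) (ord_coeff_ne (fun h0 => by rw [h0] at h1; simp at h1))
  · exact h

lemma ne_zero_of_coeff {f : PowerSeries K} {n : ℕ} (h : coeff n f ≠ 0) : f ≠ 0 := by
  intro h0; rw [h0] at h; simp at h

lemma ord_mul {f g : PowerSeries K} (hf : f ≠ 0) (hg : g ≠ 0) :
    f * g ≠ 0 ∧ ord K (f * g) = ord K f + ord K g := by
  set a := ord K f with ha; set b := ord K g with hb
  have hc : coeff (a + b) (f * g) = coeff a f * coeff b g := by
    rw [coeff_mul]
    rw [Finset.sum_eq_single (a, b)]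
    · intro p hp hne
      rcases Finset.HasAntidiagonal.mem_antidiagonal.mp hp with h
      rcases lt_or_ge p.1 a with h1 | h1
      · rw [coeff_eq_zero_of_lt_ord h1, zero_mul]
      · have : p.2 < b := by
          rcases lt_or_eq_of_le h1 with h' | h'
          · omega
          · exact absurd (Prod.ext h'.symm (by omega)) hne
        rw [coeff_eq_zero_of_lt_ord this, mul_zero]
    · intro h; exact absurd (Finset.HasAntidiagonal.mem_antidiagonal.mpr (by rfl)) h
  have hne : coeff (a + b) (f * g) ≠ 0 := by
    rw [hc]; exact mul_ne_zero (ord_coeff_ne hf) (ord_coeff_ne hg)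
  refine ⟨ne_zero_of_coeff hne, ord_eq hne ?_⟩
  intro i hi
  rw [coeff_mul]
  apply Finset.sum_eq_zero
  intro p hp
  have := Finset.HasAntidiagonal.mem_antidiagonal.mp hp
  rcases lt_or_ge p.1 a with h1 | h1
  · rw [coeff_eq_zero_of_lt_ord h1, zero_mul]
  · rw [coeff_eq_zero_of_lt_ord (show p.2 < b by omega), mul_zero]

lemma ord_one : ord K (1 : PowerSeries K) = 0 :=
  ord_eq (by simp) (by omega)


variable {R : Subalgebra K (PowerSeries K)}

/-- The submodule of power series of order at least `n`, as an `R`-submodule. -/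
def highOrd (R : Subalgebra K (PowerSeries K)) (n : ℕ) : Submodule ↥R (PowerSeries K) where
  carrier := {g | ∀ i < n, coeff i g = 0}
  add_mem' := by intro a b ha hb i hi; simp [ha i hi, hb i hi]
  zero_mem' := by intro i _; simp
  smul_mem' := by
    intro r g hg i hi
    have : r • g = (r : PowerSeries K) * g := rfl
    rw [this, coeff_mul]
    apply Finset.sum_eq_zero
    intro p hp
    have := Finset.HasAntidiagonal.mem_antidiagonal.mp hp
    rw [hg p.2 (by omega), mul_zero]

lemma oSet_cofinite {R : Subalgebra K (PowerSeries K)} (h : FiniteLengthQuot K R) :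
    ∃ N, ∀ n ≥ N, n ∈ oSet K R := by
  classical
  set p := LinearMap.range (Algebra.linearMap R (PowerSeries K)) with hp
  set Q := PowerSeries K ⧸ p with hQ
  have hart : IsArtinian ↥R Q := ((isFiniteLength_iff_isNoetherian_isArtinian).mp h).2
  set Nn : ℕ →o (Submodule ↥R Q)ᵒᵈ :=
    ⟨fun n => Submodule.map p.mkQ (highOrd R n), by
      intro m n hmn
      show Submodule.map p.mkQ (highOrd R n) ≤ Submodule.map p.mkQ (highOrd R m)
      apply Submodule.map_mono
      intro g hg i hi
      exact hg i (lt_of_lt_of_le hi hmn)⟩ with hNn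
  obtain ⟨N, hst⟩ := IsArtinian.monotone_stabilizes Nn
  refine ⟨N, fun n hn => ?_⟩
  have heq : Submodule.map p.mkQ (highOrd R n) = Submodule.map p.mkQ (highOrd R (n + 1)) := by
    have h1 := hst n hn
    have h2 := hst (n + 1) (by omega)
    exact h1.symm.trans h2
  have hx : p.mkQ ((X : PowerSeries K) ^ n) ∈ Submodule.map p.mkQ (highOrd R (n + 1)) := by
    rw [← heq]
    exact Submodule.mem_map_of_mem (by
      intro i hi
      rw [coeff_X_pow]
      simp [Nat.ne_of_lt hi])
  obtain ⟨g, hg, hgx⟩ := hx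
  have hmem : (X : PowerSeries K) ^ n - g ∈ p := by
    rw [← Submodule.Quotient.eq p]
    exact (hgx).symm
  obtain ⟨r, hr⟩ := hmem
  have hrR : ((X : PowerSeries K) ^ n - g) ∈ R := by
    rw [← hr]
    exact (r : ↥R).2
  have hcn : coeff n ((X : PowerSeries K) ^ n - g) = 1 := by
    rw [map_sub, coeff_X_pow, hg n (by omega)]
    simp
  have hlt : ∀ i < n, coeff i ((X : PowerSeries K) ^ n - g) = 0 := by
    intro i hi
    rw [map_sub, coeff_X_pow, hg i (by omega)]
    simp [Nat.ne_of_lt hi]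
  exact ⟨_, hrR, ne_zero_of_coeff (hcn ▸ one_ne_zero), ord_eq (hcn ▸ one_ne_zero) hlt⟩

lemma exists_monic {b : ℕ} (hb : b ∈ oSet K R) :
    ∃ h ∈ R, ord K h = b ∧ coeff b h = 1 := by
  obtain ⟨q, hqR, hq0, hqo⟩ := hb
  have hc : coeff b q ≠ 0 := by rw [← hqo]; exact ord_coeff_ne hq0
  refine ⟨(coeff b q)⁻¹ • q, R.smul_mem hqR _, ?_, ?_⟩
  · apply ord_eq
    · rw [map_smul, smul_eq_mul]
      exact mul_ne_zero (inv_ne_zero hc) hc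
    · intro i hi
      rw [map_smul, smul_eq_mul, coeff_eq_zero_of_lt_ord (show i < ord K q by rw [hqo]; exact hi), mul_zero]
  · rw [map_smul, smul_eq_mul, inv_mul_cancel₀ hc]

lemma reduced_unique {a : ℕ} {g g' : PowerSeries K} (hg : g ∈ R) (hg' : g' ∈ R)
    (mg : coeff a g = 1) (mg' : coeff a g' = 1)
    (rg : ∀ i ∈ oSet K R, i ≠ a → coeff i g = 0)
    (rg' : ∀ i ∈ oSet K R, i ≠ a → coeff i g' = 0) : g = g' := by
  by_contra hne
  have hd0 : g - g' ≠ 0 := sub_ne_zero_of_ne hne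
  have hdS : ord K (g - g') ∈ oSet K R := ⟨g - g', R.sub_mem hg hg', hd0, rfl⟩
  have hdc : coeff (ord K (g - g')) (g - g') ≠ 0 := ord_coeff_ne hd0
  set j := ord K (g - g')
  by_cases hja : j = a
  · rw [map_sub, hja, mg, mg'] at hdc; simp at hdc
  · rw [map_sub, rg j hdS hja, rg' j hdS hja] at hdc; simp at hdc

lemma exists_reduced
    (hcl : ∀ g : PowerSeries K, (∀ n, ∃ p ∈ R, ∀ i ≤ n, coeff i g = coeff i p) → g ∈ R)
    {a : ℕ} (ha : a ∈ oSet K R) :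
    ∃ g ∈ R, ord K g = a ∧ coeff a g = 1 ∧ ∀ i ∈ oSet K R, i ≠ a → coeff i g = 0 := by
  classical
  obtain ⟨g0, hg0R, hg0o, hg0m⟩ := exists_monic ha
  let M : ℕ → PowerSeries K := fun b => if hb : b ∈ oSet K R then (exists_monic hb).choose else 0
  have hM : ∀ b ∈ oSet K R, M b ∈ R ∧ ord K (M b) = b ∧ coeff b (M b) = 1 := by
    intro b hb
    simp only [M, dif_pos hb]
    obtain ⟨h1, h2, h3⟩ := (exists_monic hb).choose_spec
    exact ⟨h1, h2, h3⟩
  let step : ℕ → PowerSeries K → PowerSeries K := fun n pn =>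
    if (n + 1) ∈ oSet K R ∧ n + 1 ≠ a then pn - (coeff (n + 1) pn) • M (n + 1) else pn
  let p : ℕ → PowerSeries K := fun n => Nat.rec g0 step n
  have hps : ∀ n, p (n + 1) = step n (p n) := fun n => rfl
  have hp0 : p 0 = g0 := rfl
  have inv : ∀ n, p n ∈ R ∧ (∀ i < a, coeff i (p n) = 0) ∧ coeff a (p n) = 1 ∧
      (∀ i ≤ n, i ∈ oSet K R → i ≠ a → coeff i (p n) = 0) := by
    intro n
    induction n with
    | zero =>
      refine ⟨hg0R, fun i hi => coeff_eq_zero_of_lt_ord (show i < ord K (p 0) by rw [hp0, hg0o]; exact hi), hg0m, ?_⟩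
      intro i hi hiS hia
      have hi0 : i = 0 := by omega
      subst hi0
      exact coeff_eq_zero_of_lt_ord (show 0 < ord K (p 0) by rw [hp0, hg0o]; omega)
    | succ n IH =>
      obtain ⟨h1, h2, h3, h4⟩ := IH
      rw [hps]
      by_cases hc : (n + 1) ∈ oSet K R ∧ n + 1 ≠ a
      · simp only [step, if_pos hc]
        obtain ⟨hMR, hMo, hMm⟩ := hM (n + 1) hc.1
        by_cases hlt : n + 1 < a
        · rw [h2 (n + 1) hlt, zero_smul, sub_zero]
          refine ⟨h1, h2, h3, ?_⟩
          intro i hi hiS hia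
          rcases Nat.lt_or_ge i (n + 1) with h | h
          · exact h4 i (by omega) hiS hia
          · have : i = n + 1 := by omega
            subst this
            exact h2 _ hlt
        · have halt : a < n + 1 := by omega
          refine ⟨R.sub_mem h1 (R.smul_mem hMR _), ?_, ?_, ?_⟩
          · intro i hi
            rw [map_sub, map_smul, smul_eq_mul,
              coeff_eq_zero_of_lt_ord (show i < ord K (M (n+1)) by omega), mul_zero, sub_zero]
            exact h2 i hi
          · rw [map_sub, map_smul, smul_eq_mul,
              coeff_eq_zero_of_lt_ord (show a < ord K (M (n+1)) by omega), mul_zero, sub_zero]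
            exact h3
          · intro i hi hiS hia
            rcases Nat.lt_or_ge i (n + 1) with h | h
            · rw [map_sub, map_smul, smul_eq_mul,
                coeff_eq_zero_of_lt_ord (show i < ord K (M (n+1)) by omega), mul_zero, sub_zero]
              exact h4 i (by omega) hiS hia
            · have : i = n + 1 := by omega
              subst this
              rw [map_sub, map_smul, smul_eq_mul, hMm, mul_one, sub_self]
      · simp only [step, if_neg hc]
        refine ⟨h1, h2, h3, ?_⟩
        intro i hi hiS hia
        rcases Nat.lt_or_ge i (n + 1) with h | h
        · exact h4 i (by omega) hiS hia
        · have : i = n + 1 := by omega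
          subst this
          exact absurd ⟨hiS, hia⟩ hc
  have stab1 : ∀ m i, i ≤ m → coeff i (p (m + 1)) = coeff i (p m) := by
    intro m i him
    rw [hps]
    by_cases hc : (m + 1) ∈ oSet K R ∧ m + 1 ≠ a
    · simp only [step, if_pos hc]
      rw [map_sub, map_smul, smul_eq_mul,
        coeff_eq_zero_of_lt_ord (show i < ord K (M (m+1)) by rw [(hM _ hc.1).2.1]; omega),
        mul_zero, sub_zero]
    · simp only [step, if_neg hc]
  have stab : ∀ n m, n ≤ m → ∀ i ≤ n, coeff i (p m) = coeff i (p n) := by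
    intro n m
    induction m with
    | zero => intro hnm i hi; obtain rfl : n = 0 := Nat.le_zero.mp hnm; rfl
    | succ m IH =>
      intro hnm i hi
      rcases Nat.lt_or_ge m n with h | h
      · obtain rfl : n = m + 1 := by omega
        rfl
      · rw [stab1 m i (by omega)]; exact IH h i hi
  set g : PowerSeries K := PowerSeries.mk (fun i => coeff i (p i)) with hgdef
  have hgc : ∀ i, coeff i g = coeff i (p i) := fun i => coeff_mk i _
  have hgR : g ∈ R := by
    apply hcl
    intro n
    refine ⟨p n, (inv n).1, fun i hi => ?_⟩
    rw [hgc i, ← stab i n hi i le_rfl]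
  have hlow : ∀ i < a, coeff i g = 0 := fun i hi => by rw [hgc i]; exact (inv i).2.1 i hi
  have hmon : coeff a g = 1 := by rw [hgc a]; exact (inv a).2.2.1
  refine ⟨g, hgR, ord_eq (hmon ▸ one_ne_zero) hlow, hmon, ?_⟩
  intro i hiS hia
  rw [hgc i]
  exact (inv i).2.2.2 i le_rfl hiS hia

lemma zero_mem_oSet : 0 ∈ oSet K R :=
  ⟨1, R.one_mem, one_ne_zero, ord_one⟩

lemma add_mem_oSet {a b : ℕ} (ha : a ∈ oSet K R) (hb : b ∈ oSet K R) : a + b ∈ oSet K R := by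
  obtain ⟨p, hpR, hp0, hpo⟩ := ha
  obtain ⟨q, hqR, hq0, hqo⟩ := hb
  obtain ⟨h1, h2⟩ := ord_mul hp0 hq0
  exact ⟨p * q, R.mul_mem hpR hqR, h1, by rw [h2, hpo, hqo]⟩

/-- `oSet` as an additive submonoid of `ℕ`. -/
def oSubmonoid (R : Subalgebra K (PowerSeries K)) : AddSubmonoid ℕ where
  carrier := oSet K R
  add_mem' := add_mem_oSet
  zero_mem' := zero_mem_oSet

lemma closure_minGens : oSet K R = ↑(AddSubmonoid.closure (minGens K R)) := by
  apply Set.Subset.antisymm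
  · intro a ha
    induction a using Nat.strong_induction_on with
    | _ a IH =>
      rcases Nat.eq_zero_or_pos a with h0 | h0
      · subst h0; exact AddSubmonoid.zero_mem _
      by_cases hm : a ∈ minGens K R
      · exact AddSubmonoid.subset_closure hm
      · have : ∃ b ∈ oSet K R, b ≠ 0 ∧ (∃ u ∈ oSet K R, a = b + u) ∧ b ≠ a := by
          by_contra hc
          push_neg at hc
          exact hm ⟨ha, by omega, fun b hb hb0 hu => hc b hb hb0 hu⟩
        obtain ⟨b, hb, hb0, ⟨u, hu, hab⟩, hba⟩ := this
        have hu0 : u ≠ 0 := by rintro rfl; omega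
        exact hab ▸ AddSubmonoid.add_mem _ (IH b (by omega) hb) (IH u (by omega) hu)
  · intro a ha
    have : a ∈ oSubmonoid R := by
      refine AddSubmonoid.closure_le.mpr ?_ ha
      intro b hb
      exact hb.1
    exact this

lemma minGens_finite (N : ℕ) (hN : ∀ n ≥ N, n ∈ oSet K R) : (minGens K R).Finite := by
  apply Set.Finite.subset (Set.finite_Iic (2 * N + 1))
  intro a ⟨haS, ha0, hmin⟩
  by_contra h
  simp only [Set.mem_Iic] at h
  have hm : (N + 1 : ℕ) ∈ oSet K R := hN _ (by omega)
  have hu : (a - (N + 1) : ℕ) ∈ oSet K R := hN _ (by omega)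
  have := hmin (N + 1) hm (by omega) ⟨a - (N + 1), hu, by omega⟩
  omega


end Aux

lemma seriesAlgebra_closed {K : Type*} [Field K] {s : ℕ} (f : Fin s → PowerSeries K)
    {g : PowerSeries K}
    (h : ∀ n, ∃ p ∈ seriesAlgebra f, ∀ i ≤ n, coeff i g = coeff i p) :
    g ∈ seriesAlgebra f := by
  intro n
  obtain ⟨p, hp, hag⟩ := h n
  obtain ⟨q, hq, hpq⟩ := hp n
  exact ⟨q, hq, fun i hi => (hag i hi).trans (hpq i hi)⟩

/-- `R = K⟦f₁,…,f_s⟧` has exactly one minimal reduced basis. -/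
theorem stmt_8 (K : Type*) [Field K] {s : ℕ} (f : Fin s → PowerSeries K)
    (hf0 : ∀ i, f i ≠ 0) (hford : ∀ i, 0 < ord K (f i))
    (hlen : FiniteLengthQuot K (seriesAlgebra f)) :
    ∃! B : Finset (PowerSeries K), IsMinimalReducedBasis K (seriesAlgebra f) B := by
  classical
  set R := seriesAlgebra f with hRdef
  have hcl : ∀ g : PowerSeries K, (∀ n, ∃ p ∈ R, ∀ i ≤ n, coeff i g = coeff i p) → g ∈ R :=
    fun g h => seriesAlgebra_closed f h
  obtain ⟨N, hN⟩ := Aux.oSet_cofinite hlen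
  have hfin : (minGens K R).Finite := Aux.minGens_finite N hN
  have hmg_sub : minGens K R ⊆ oSet K R := fun a ha => ha.1
  let red : ℕ → PowerSeries K := fun a =>
    if h : a ∈ oSet K R then (Aux.exists_reduced hcl h).choose else 0
  have hred : ∀ a ∈ oSet K R, red a ∈ R ∧ ord K (red a) = a ∧ coeff a (red a) = 1 ∧
      ∀ i ∈ oSet K R, i ≠ a → coeff i (red a) = 0 := by
    intro a ha
    simp only [red, dif_pos ha]
    obtain ⟨h1, h2, h3, h4⟩ := (Aux.exists_reduced hcl ha).choose_spec
    exact ⟨h1, h2, h3, h4⟩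
  set B0 : Finset (PowerSeries K) := hfin.toFinset.image red with hB0
  have key : ∀ a ∈ oSet K R, ∀ g ∈ (R : Set (PowerSeries K)), ord K g = a →
      coeff (ord K g) g = 1 →
      (∀ i, coeff i (g - (X : PowerSeries K) ^ ord K g) ≠ 0 → i ∉ oSet K R) → g = red a := by
    intro a ha g hgR hgo hgm hgr
    obtain ⟨r1, r2, r3, r4⟩ := hred a ha
    refine Aux.reduced_unique (a := a) hgR r1 ?_ r3 ?_ r4
    · rw [← hgo]; exact hgm
    · intro i hiS hia
      by_contra hci
      apply absurd hiS
      apply hgr i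
      rw [map_sub, coeff_X_pow, hgo, if_neg hia, sub_zero]
      exact hci
  have hmemB0 : ∀ g, g ∈ B0 ↔ ∃ a ∈ minGens K R, g = red a := by
    intro g
    simp only [hB0, Finset.mem_image, Set.Finite.mem_toFinset]
    constructor
    · rintro ⟨a, ha, rfl⟩; exact ⟨a, ha, rfl⟩
    · rintro ⟨a, ha, rfl⟩; exact ⟨a, ha, rfl⟩
  have hcoeB0 : (↑B0 : Set (PowerSeries K)) = red '' (minGens K R) := by
    rw [hB0, Finset.coe_image, Set.Finite.coe_toFinset]
  have hordim : ord K '' ↑B0 = minGens K R := by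
    rw [hcoeB0, ← Set.image_comp]
    apply Set.Subset.antisymm
    · rintro _ ⟨a, ha, rfl⟩
      simp only [Function.comp_apply]
      rw [(hred a (hmg_sub ha)).2.1]
      exact ha
    · intro a ha
      exact ⟨a, ha, (hred a (hmg_sub ha)).2.1⟩
  have hbasis : IsMinimalReducedBasis K R B0 := by
    refine ⟨?_, ?_, ?_, hordim, ?_⟩
    · intro g hg
      obtain ⟨a, ha, rfl⟩ := (hmemB0 g).mp (Finset.mem_coe.mp hg)
      exact (hred a (hmg_sub ha)).1
    · intro g hg
      obtain ⟨a, ha, rfl⟩ := (hmemB0 g).mp hg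
      obtain ⟨_, h2, h3, _⟩ := hred a (hmg_sub ha)
      rw [h2]; exact h3
    · rw [hordim]; exact Aux.closure_minGens
    · intro g hg i hci
      obtain ⟨a, ha, rfl⟩ := (hmemB0 g).mp hg
      obtain ⟨_, h2, h3, h4⟩ := hred a (hmg_sub ha)
      rw [h2] at hci
      intro hiS
      by_cases hia : i = a
      · subst hia
        rw [map_sub, coeff_X_pow, if_pos rfl, h3, sub_self] at hci
        exact hci rfl
      · rw [map_sub, coeff_X_pow, if_neg hia, sub_zero, h4 i hiS hia] at hci
        exact hci rfl
  refine ⟨B0, hbasis, ?_⟩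
  intro B' hB'
  obtain ⟨hB'R, hB'm, hB'cl, hB'gen, hB'red⟩ := hB'
  apply Finset.ext
  intro g
  rw [hmemB0]
  constructor
  · intro hg
    have hgo : ord K g ∈ minGens K R := by
      rw [← hB'gen]
      exact ⟨g, Finset.mem_coe.mpr hg, rfl⟩
    exact ⟨ord K g, hgo,
      key _ (hmg_sub hgo) g (hB'R (Finset.mem_coe.mpr hg)) rfl (hB'm g hg) (hB'red g hg)⟩
  · rintro ⟨a, ha, rfl⟩
    obtain ⟨g', hg', hg'o⟩ := (hB'gen ▸ ha : a ∈ ord K '' ↑B')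
    have heq : g' = red a := key a (hmg_sub ha) g' (hB'R hg')
      hg'o (hB'm g' (Finset.mem_coe.mp hg')) (hB'red g' (Finset.mem_coe.mp hg'))
    rw [← heq]
    exact Finset.mem_coe.mp hg'
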